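/- If q0 satisfies the latent-level bridge equation 1/f(a(0) | u(0), x(0)) = E[Q0(a(0)) | a(0), u(0), x(0)] and (Z(0), A(0)) ⟂ W(0) | (X(0), U(0)), then for every integrable function n0 of (W(0), A(0), X(0)), E[ Q0(A(0)) n0(W(0), A(0), X(0)) ] = E[ n0(W(0), 1, X(0)) + n0(W(0), 0, X(0)) ]. -/
import Mathlib


open Finset MeasureTheory

open scoped Classical

/-- Probability of an event on a finite outcome space with mass function `p`. -/
noncomputable def pr {Ω : Type*} [Fintype Ω] (p : Ω → ℝ) (E : Ω → Prop) : ℝ :=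
  ∑ ω, if E ω then p ω else 0

/-- Conditional expectation `E[f | E]` on a finite outcome space. -/
noncomputable def cexp {Ω : Type*} [Fintype Ω] (p : Ω → ℝ) (f : Ω → ℝ) (E : Ω → Prop) : ℝ :=
  (∑ ω, if E ω then p ω * f ω else 0) / pr p E

/-- Conditional probability `P(E | F)` on a finite outcome space. -/
noncomputable def cprob {Ω : Type*} [Fintype Ω] (p : Ω → ℝ) (E F : Ω → Prop) : ℝ :=
  pr p (fun ω => E ω ∧ F ω) / pr p F

/-- Expectation on a finite outcome space. -/
noncomputable def pexp {Ω : Type*} [Fintype Ω] (p : Ω → ℝ) (f : Ω → ℝ) : ℝ :=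
  ∑ ω, p ω * f ω

/-- `S` is conditionally independent of `T` given `C`:  for every pair of (bounded) test
functions `F, G` and every value `c` of `C` with positive probability, the conditional
expectation of the product factorizes. -/
def CondIndep {Ω α β γ : Type*} [Fintype Ω] (p : Ω → ℝ)
    (S : Ω → α) (T : Ω → β) (C : Ω → γ) : Prop :=
  ∀ (F : α → ℝ) (G : β → ℝ) (c : γ), pr p (fun ω => C ω = c) ≠ 0 →
    cexp p (fun ω => F (S ω) * G (T ω)) (fun ω => C ω = c) =
      cexp p (fun ω => F (S ω)) (fun ω => C ω = c) *
        cexp p (fun ω => G (T ω)) (fun ω => C ω = c)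


section Aux

variable {Ω : Type*} [Fintype Ω]

lemma pr_congr (p : Ω → ℝ) {E F : Ω → Prop} (h : ∀ ω, E ω ↔ F ω) :
    pr p E = pr p F := by
  unfold pr
  exact Finset.sum_congr rfl fun ω _ => if_congr (h ω) rfl rfl

lemma cexp_congr (p : Ω → ℝ) (f : Ω → ℝ) {E F : Ω → Prop} (h : ∀ ω, E ω ↔ F ω) :
    cexp p f E = cexp p f F := by
  unfold cexp
  rw [pr_congr p h]
  congr 1
  exact Finset.sum_congr rfl fun ω _ => if_congr (h ω) rfl rfl

lemma pr_nonneg {p : Ω → ℝ} (hp : ∀ ω, 0 ≤ p ω) (E : Ω → Prop) : 0 ≤ pr p E :=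
  Finset.sum_nonneg fun ω _ => by split <;> simp [hp ω]

lemma pr_zero {p : Ω → ℝ} (hp : ∀ ω, 0 ≤ p ω) {E : Ω → Prop} (h : pr p E = 0)
    {ω : Ω} (hE : E ω) : p ω = 0 := by
  have := (Finset.sum_eq_zero_iff_of_nonneg
    (fun ω (_ : ω ∈ Finset.univ) => by split <;> simp [hp ω])).mp h ω (Finset.mem_univ ω)
  simpa [hE] using this

end Aux

/-- unbiasedness of the first-stage treatment-bridge estimating equation:
if `q0` satisfies its latent-level bridge equation and `(Z(0), A(0)) ⟂ W(0) | (X(0), U(0))`,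
then for every `n0`, `E[Q0(A(0)) n0(W(0), A(0), X(0))] = E[n0(W(0), 1, X(0)) + n0(W(0), 0, X(0))]`. -/
theorem stmt_15 {Ω 𝒰 𝒳 𝒵 𝒲 : Type*} [Fintype Ω]
    (p : Ω → ℝ) (hp : ∀ ω, 0 ≤ p ω) (hsum : ∑ ω, p ω = 1)
    (A0 : Ω → Bool) (U0 : Ω → 𝒰) (X0 : Ω → 𝒳) (Z0 : Ω → 𝒵) (W0 : Ω → 𝒲)
    (q0 : 𝒵 → Bool → 𝒳 → ℝ)
    (hCI : CondIndep p (fun ω => (Z0 ω, A0 ω)) W0 (fun ω => (X0 ω, U0 ω)))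
    (hpos : ∀ (a : Bool) u x, pr p (fun ω => U0 ω = u ∧ X0 ω = x) ≠ 0 →
      0 < cprob p (fun ω => A0 ω = a) (fun ω => U0 ω = u ∧ X0 ω = x))
    (hbridge : ∀ (a : Bool) u x, pr p (fun ω => A0 ω = a ∧ U0 ω = u ∧ X0 ω = x) ≠ 0 →
      (cprob p (fun ω => A0 ω = a) (fun ω => U0 ω = u ∧ X0 ω = x))⁻¹ =
        cexp p (fun ω => q0 (Z0 ω) a (X0 ω))
          (fun ω => A0 ω = a ∧ U0 ω = u ∧ X0 ω = x)) :
    ∀ n0 : 𝒲 → Bool → 𝒳 → ℝ,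
      pexp p (fun ω => q0 (Z0 ω) (A0 ω) (X0 ω) * n0 (W0 ω) (A0 ω) (X0 ω)) =
        pexp p (fun ω => n0 (W0 ω) true (X0 ω) + n0 (W0 ω) false (X0 ω)) := by

  intro n0
  -- group both expectations by the value of C ω = (X0 ω, U0 ω)
  set C : Ω → 𝒳 × 𝒰 := fun ω => (X0 ω, U0 ω) with hC
  have fiber : ∀ c : 𝒳 × 𝒰,
      (∑ ω, if C ω = c then p ω * (q0 (Z0 ω) (A0 ω) (X0 ω) * n0 (W0 ω) (A0 ω) (X0 ω)) else 0)
        = ∑ ω, if C ω = c then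
            p ω * (n0 (W0 ω) true (X0 ω) + n0 (W0 ω) false (X0 ω)) else 0 := by
    rintro ⟨x, u⟩
    by_cases hE : pr p (fun ω => C ω = (x, u)) = 0
    · refine Finset.sum_congr rfl fun ω _ => ?_
      split_ifs with h
      · rw [pr_zero hp hE h]; ring_nf
      · rfl
    · have hprE_pos : 0 < pr p (fun ω => C ω = (x, u)) :=
        lt_of_le_of_ne (pr_nonneg hp _) (Ne.symm hE)
      have hiff : ∀ ω, (U0 ω = u ∧ X0 ω = x) ↔ C ω = (x, u) := by
        intro ω; simp [hC, Prod.ext_iff, and_comm]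
      have hiffA : ∀ a : Bool, ∀ ω,
          (A0 ω = a ∧ U0 ω = u ∧ X0 ω = x) ↔ (A0 ω = a ∧ C ω = (x, u)) := by
        intro a ω; rw [hiff ω]
      have hprUX : pr p (fun ω => U0 ω = u ∧ X0 ω = x) = pr p (fun ω => C ω = (x, u)) :=
        pr_congr p hiff
      -- for each arm a, the weighted numerator equals the plain numerator
      have key : ∀ a : Bool,
          (∑ ω, if C ω = (x, u) then
              p ω * ((if A0 ω = a then q0 (Z0 ω) a x else 0) * n0 (W0 ω) a x) else 0)
            = ∑ ω, if C ω = (x, u) then p ω * n0 (W0 ω) a x else 0 := by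
        intro a
        have hprA : 0 < pr p (fun ω => A0 ω = a ∧ C ω = (x, u)) := by
          have h1 := hpos a u x (by rw [hprUX]; exact hE)
          have : cprob p (fun ω => A0 ω = a) (fun ω => U0 ω = u ∧ X0 ω = x)
              = pr p (fun ω => A0 ω = a ∧ C ω = (x, u)) / pr p (fun ω => C ω = (x, u)) := by
            unfold cprob
            rw [hprUX, pr_congr p (fun ω => by rw [hiff ω] : ∀ ω,
              (A0 ω = a ∧ U0 ω = u ∧ X0 ω = x) ↔ (A0 ω = a ∧ C ω = (x, u)))]
          rw [this] at h1
          have := mul_pos h1 hprE_pos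
          rwa [div_mul_cancel₀ _ hE] at this
        -- the bridge equation, rewritten with event C ω = (x,u)
        have hbr := hbridge a u x (by
          rw [pr_congr p (hiffA a)]; exact ne_of_gt hprA)
        have hcprob : cprob p (fun ω => A0 ω = a) (fun ω => U0 ω = u ∧ X0 ω = x)
            = pr p (fun ω => A0 ω = a ∧ C ω = (x, u)) / pr p (fun ω => C ω = (x, u)) := by
          unfold cprob
          rw [hprUX, pr_congr p (hiffA a)]
        rw [hcprob, cexp_congr p _ (hiffA a)] at hbr
        -- numerator of the bridge cexp, with X0 ω replaced by x on the event
        have hnum : (∑ ω, if A0 ω = a ∧ C ω = (x, u) then p ω * q0 (Z0 ω) a (X0 ω) else 0)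
            = ∑ ω, if A0 ω = a ∧ C ω = (x, u) then p ω * q0 (Z0 ω) a x else 0 := by
          refine Finset.sum_congr rfl fun ω _ => ?_
          split_ifs with h
          · have : X0 ω = x := by
              have := h.2; simp [hC, Prod.ext_iff] at this; exact this.1
            rw [this]
          · rfl
        unfold cexp at hbr
        simp only at hbr
        rw [hnum] at hbr
        -- conclude: weighted numerator over event equals pr of event C = (x,u)
        have hSnum : (∑ ω, if A0 ω = a ∧ C ω = (x, u) then p ω * q0 (Z0 ω) a x else 0)
            = pr p (fun ω => C ω = (x, u)) := by
          have hA := ne_of_gt hprA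
          field_simp at hbr
          -- hbr : pr E * pr (A∧E) = pr (A∧E) * Snum  (or some arrangement)
          nlinarith [hbr, hprA, hprE_pos]
        -- apply conditional independence
        have hci := hCI (fun za => if za.2 = a then q0 za.1 a x else 0)
          (fun w => n0 w a x) (x, u) hE
        have hone : cexp p (fun ω => if A0 ω = a then q0 (Z0 ω) a x else 0)
            (fun ω => C ω = (x, u)) = 1 := by
          unfold cexp
          have : (∑ ω, if C ω = (x, u) then
                p ω * (if A0 ω = a then q0 (Z0 ω) a x else 0) else 0)
              = ∑ ω, if A0 ω = a ∧ C ω = (x, u) then p ω * q0 (Z0 ω) a x else 0 := by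
            refine Finset.sum_congr rfl fun ω _ => ?_
            by_cases h1 : C ω = (x, u) <;> by_cases h2 : A0 ω = a <;>
              simp [h1, h2]
          simp only
          rw [this, hSnum, div_self hE]
        simp only at hci
        rw [hone, one_mul] at hci
        unfold cexp at hci
        simp only at hci
        have := congrArg (· * pr p (fun ω => C ω = (x, u))) hci
        simpa [div_mul_cancel₀ _ hE] using this
      -- combine the two arms
      have expand : ∀ ω, C ω = (x, u) →
          q0 (Z0 ω) (A0 ω) (X0 ω) * n0 (W0 ω) (A0 ω) (X0 ω)
            = (if A0 ω = true then q0 (Z0 ω) true x else 0) * n0 (W0 ω) true x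
              + (if A0 ω = false then q0 (Z0 ω) false x else 0) * n0 (W0 ω) false x := by
        intro ω h
        have hx : X0 ω = x := by
          simp [hC, Prod.ext_iff] at h; exact h.1
        cases hA : A0 ω <;> simp [hx, hA]
      calc (∑ ω, if C ω = (x, u) then
              p ω * (q0 (Z0 ω) (A0 ω) (X0 ω) * n0 (W0 ω) (A0 ω) (X0 ω)) else 0)
          = (∑ ω, if C ω = (x, u) then
              p ω * ((if A0 ω = true then q0 (Z0 ω) true x else 0) * n0 (W0 ω) true x) else 0)
            + ∑ ω, if C ω = (x, u) then
              p ω * ((if A0 ω = false then q0 (Z0 ω) false x else 0) * n0 (W0 ω) false x)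
                else 0 := by
            rw [← Finset.sum_add_distrib]
            refine Finset.sum_congr rfl fun ω _ => ?_
            by_cases h : C ω = (x, u)
            · simp only [if_pos h]; rw [expand ω h]; ring
            · simp [h]
        _ = (∑ ω, if C ω = (x, u) then p ω * n0 (W0 ω) true x else 0)
            + ∑ ω, if C ω = (x, u) then p ω * n0 (W0 ω) false x else 0 := by
            rw [key true, key false]
        _ = ∑ ω, if C ω = (x, u) then
              p ω * (n0 (W0 ω) true (X0 ω) + n0 (W0 ω) false (X0 ω)) else 0 := by
            rw [← Finset.sum_add_distrib]
            refine Finset.sum_congr rfl fun ω _ => ?_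
            by_cases h : C ω = (x, u)
            · have hx : X0 ω = x := by
                simp [hC, Prod.ext_iff] at h; exact h.1
              simp only [if_pos h, hx]; ring
            · simp [h]
  -- now sum the fiberwise identity
  have decomp : ∀ f : Ω → ℝ, pexp p f
      = ∑ c ∈ Finset.univ.image C, ∑ ω, if C ω = c then p ω * f ω else 0 := by
    intro f
    unfold pexp
    rw [← Finset.sum_fiberwise_of_maps_to (g := C) (t := Finset.univ.image C)
      (fun ω _ => Finset.mem_image_of_mem C (Finset.mem_univ ω)) (fun ω => p ω * f ω)]
    exact Finset.sum_congr rfl fun c _ => Finset.sum_filter _ _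
  rw [decomp, decomp]
  exact Finset.sum_congr rfl fun c _ => fiber c
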